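/- Fix k ≥ 1 and R > 0. For n ≥ k+1 let D = 2k(n−k), vol G_{k,n} = ∏_{i=n−k+1}^{n} (2π^i/(i−1)!) / ∏_{j=1}^{k} (2π^j/(j−1)!), |B^D| = π^{D/2}/Γ(D/2+1), and define the Gilbert–Varshamov radius r̲₀(n) = (2^{−nR} · vol G_{k,n}/|B^D|)^{1/D}. Then (i) r̲₀(n) ≥ (1/2)^{nR/D} for every n ≥ k+1, with this lower bound monotonically increasing in n, and (ii) lim_{n→∞} r̲₀(n) = √(k · 2^{−R/k}) = √(k/2^{R/k}). -/

import Mathlib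

open Real Finset Filter

/-- Total volume of the complex Grassmann manifold `G_{k,n}`. -/
noncomputable def grassmannVol (k n : ℕ) : ℝ :=
  (∏ i ∈ Finset.Icc (n - k + 1) n, 2 * π ^ (i : ℕ) / (Nat.factorial (i - 1) : ℝ)) /
    ∏ j ∈ Finset.Icc 1 k, 2 * π ^ (j : ℕ) / (Nat.factorial (j - 1) : ℝ)

/-- Volume of the unit ball in `ℝ^m`. -/
noncomputable def unitBallVol (m : ℕ) : ℝ :=
  π ^ ((m : ℝ) / 2) / Real.Gamma ((m : ℝ) / 2 + 1)

/-- The Gilbert–Varshamov radius for packings of cardinality `2^{nR}` in `G_{k,n}`,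
obtained from the flat comparison volume `|B^D| r^D = vol G_{k,n} / 2^{nR}`,
`D = 2k(n−k)`. -/
noncomputable def gvRadiusGrassmann (k : ℕ) (R : ℝ) (n : ℕ) : ℝ :=
  ((2 : ℝ) ^ (-(n : ℝ) * R) * grassmannVol k n / unitBallVol (2 * k * (n - k))) ^
    (1 / ((2 * k * (n - k) : ℕ) : ℝ))

noncomputable def gvA (k m : ℕ) : ℝ :=
  ∏ j ∈ Finset.Icc 1 k, ((j - 1).factorial : ℝ) / (((m + j - 1).factorial : ℝ))

lemma gvA_pos (k m : ℕ) : 0 < gvA k m := by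
  refine Finset.prod_pos fun j hj => div_pos ?_ ?_ <;> positivity

lemma grassmannVol_eq (k m : ℕ) : grassmannVol k (m + k) = π ^ (k * m) * gvA k m := by
  unfold grassmannVol gvA
  have h1 : (m + k) - k = m := by omega
  rw [h1]
  have h2 : Finset.Icc (m + 1) (m + k) = (Finset.Icc 1 k).map (addLeftEmbedding m) := by
    rw [map_add_left_Icc]
  rw [h2, Finset.prod_map, ← Finset.prod_div_distrib]
  have h3 : ∀ j ∈ Finset.Icc 1 k,
      (2 * π ^ (addLeftEmbedding m j : ℕ) / ((addLeftEmbedding m j - 1).factorial : ℝ)) /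
        (2 * π ^ (j : ℕ) / ((j - 1).factorial : ℝ)) =
      π ^ m * (((j - 1).factorial : ℝ) / ((m + j - 1).factorial : ℝ)) := by
    intro j hj
    have : (addLeftEmbedding m j : ℕ) = m + j := rfl
    rw [this]
    have hf1 : ((m + j - 1).factorial : ℝ) ≠ 0 := by positivity
    have hf2 : ((j - 1).factorial : ℝ) ≠ 0 := by positivity
    have hpi : (π : ℝ) ≠ 0 := Real.pi_ne_zero
    rw [pow_add]
    field_simp
  rw [Finset.prod_congr rfl h3, Finset.prod_mul_distrib, Finset.prod_const, Nat.card_Icc]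
  simp [mul_comm m k, ← pow_mul]

lemma unitBallVol_eq (k m : ℕ) : unitBallVol (2 * k * m) = π ^ (k * m) / ((k * m).factorial : ℝ) := by
  unfold unitBallVol
  have h1 : ((2 * k * m : ℕ) : ℝ) / 2 = ((k * m : ℕ) : ℝ) := by push_cast; ring
  rw [h1, Real.Gamma_nat_eq_factorial, Real.rpow_natCast]

lemma fact_swap (m : ℕ) : ∀ a b : ℕ, b ≤ a →
    (b + m).factorial * a.factorial ≤ (a + m).factorial * b.factorial := by
  induction m with
  | zero => intro a b hba; simp [mul_comm]
  | succ m ih =>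
    intro a b hba
    have h1 : (b + (m+1)).factorial = (b + m + 1) * (b + m).factorial := by
      rw [show b + (m+1) = (b+m) + 1 by omega, Nat.factorial_succ]
    have h2 : (a + (m+1)).factorial = (a + m + 1) * (a + m).factorial := by
      rw [show a + (m+1) = (a+m) + 1 by omega, Nat.factorial_succ]
    rw [h1, h2, mul_assoc, mul_assoc]
    exact Nat.mul_le_mul (by omega) (ih a b hba)

lemma key_nat (k : ℕ) {m : ℕ} (hm : 1 ≤ m) :
    (∏ j ∈ Finset.Icc 1 k, (m + j - 1).factorial) ≤
      (k * m).factorial * ∏ j ∈ Finset.Icc 1 k, (j - 1).factorial := by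
  induction k with
  | zero => simp
  | succ k ih =>
    rw [Finset.prod_Icc_succ_top (by omega : 1 ≤ k + 1),
        Finset.prod_Icc_succ_top (by omega : 1 ≤ k + 1)]
    have h1 : m + (k + 1) - 1 = k + m := by omega
    have h2 : k + 1 - 1 = k := by omega
    rw [h1, h2]
    calc (∏ j ∈ Finset.Icc 1 k, (m + j - 1).factorial) * (k + m).factorial
        ≤ ((k * m).factorial * ∏ j ∈ Finset.Icc 1 k, (j - 1).factorial) * (k + m).factorial :=
          Nat.mul_le_mul_right _ ih
      _ = ((k + m).factorial * (k * m).factorial) * ∏ j ∈ Finset.Icc 1 k, (j - 1).factorial := by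
          ring
      _ ≤ ((k * m + m).factorial * k.factorial) * ∏ j ∈ Finset.Icc 1 k, (j - 1).factorial := by
          exact Nat.mul_le_mul_right _ (fact_swap m (k * m) k (Nat.le_mul_of_pos_right k hm))
      _ = ((k+1) * m).factorial * ((∏ j ∈ Finset.Icc 1 k, (j - 1).factorial) * k.factorial) := by
          rw [show (k+1) * m = k * m + m by ring]; ring

lemma ratio_eq (k m : ℕ) :
    grassmannVol k (m + k) / unitBallVol (2 * k * m) = ((k * m).factorial : ℝ) * gvA k m := by
  rw [grassmannVol_eq, unitBallVol_eq]
  have hpi : (π:ℝ) ^ (k*m) ≠ 0 := by positivity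
  have hf : ((k * m).factorial : ℝ) ≠ 0 := by positivity
  field_simp

lemma one_le_X (k : ℕ) {m : ℕ} (hm : 1 ≤ m) : 1 ≤ ((k * m).factorial : ℝ) * gvA k m := by
  unfold gvA
  rw [Finset.prod_div_distrib, ← mul_div_assoc, le_div_iff₀ (by positivity), one_mul]
  calc (∏ j ∈ Finset.Icc 1 k, (((m + j - 1).factorial : ℕ) : ℝ))
      = ((∏ j ∈ Finset.Icc 1 k, (m + j - 1).factorial : ℕ) : ℝ) := by push_cast; ring
    _ ≤ (((k * m).factorial * ∏ j ∈ Finset.Icc 1 k, (j - 1).factorial : ℕ) : ℝ) := by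
        exact_mod_cast key_nat k hm
    _ = ((k * m).factorial : ℝ) * ∏ j ∈ Finset.Icc 1 k, ((j - 1).factorial : ℝ) := by push_cast; ring

lemma gvRadius_eq (k : ℕ) (R : ℝ) {m : ℕ} :
    gvRadiusGrassmann k R (m + k) =
      ((2 : ℝ) ^ (-((m + k : ℕ) : ℝ) * R) * (((k * m).factorial : ℝ) * gvA k m)) ^
        (1 / ((2 * k * m : ℕ) : ℝ)) := by
  unfold gvRadiusGrassmann
  rw [show (m + k) - k = m by omega, mul_div_assoc, ratio_eq]




noncomputable def gvPsi (n : ℕ) : ℝ :=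
  Real.log (Stirling.stirlingSeq n) + Real.log (2 * n) / 2

lemma log_factorial_eq (n : ℕ) :
    Real.log (n.factorial : ℝ) = n * Real.log n - n + gvPsi n := by
  have h := Stirling.log_stirlingSeq_formula n
  unfold gvPsi
  rcases Nat.eq_zero_or_pos n with rfl | hn
  · simp
  · have hn0 : ((n:ℝ)) ≠ 0 := by positivity
    have hlog : Real.log ((n:ℝ) / Real.exp 1) = Real.log n - 1 := by
      rw [Real.log_div hn0 (Real.exp_ne_zero 1), Real.log_exp]
    rw [hlog] at h
    have := h
    -- h : log (stirlingSeq n) = log n! - 1/2 * log (2n) - n * (log n - 1)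
    nlinarith [h]

lemma tendsto_log_div_nat : Tendsto (fun x : ℝ => Real.log x / x) atTop (nhds 0) := by
  have h := Real.tendsto_pow_log_div_mul_add_atTop 1 0 1 one_ne_zero
  simpa using h

lemma gvPsi_div_tendsto : Tendsto (fun n : ℕ => gvPsi n / n) atTop (nhds 0) := by
  have h1 : Tendsto (fun n : ℕ => Real.log (Stirling.stirlingSeq n) * ((n : ℝ))⁻¹) atTop (nhds 0) := by
    have ha : Tendsto (fun n : ℕ => Real.log (Stirling.stirlingSeq n)) atTop
        (nhds (Real.log (Real.sqrt π))) :=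
      (Stirling.tendsto_stirlingSeq_sqrt_pi).log (by positivity)
    have hb : Tendsto (fun n : ℕ => ((n : ℝ))⁻¹) atTop (nhds 0) := tendsto_inv_atTop_zero.comp
      tendsto_natCast_atTop_atTop
    simpa using ha.mul hb
  have h2 : Tendsto (fun n : ℕ => Real.log (2 * n) / (2 * n)) atTop (nhds 0) := by
    apply tendsto_log_div_nat.comp
    apply Tendsto.const_mul_atTop (by norm_num : (0:ℝ) < 2) tendsto_natCast_atTop_atTop
  have := h1.add h2
  rw [add_zero] at this
  apply this.congr
  intro n
  unfold gvPsi
  rcases Nat.eq_zero_or_pos n with rfl | hn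
  · simp
  · have hn0 : ((n:ℝ)) ≠ 0 := by positivity
    field_simp

lemma tendsto_add_div_self (c : ℕ) :
    Tendsto (fun m : ℕ => ((m : ℝ) + c) / m) atTop (nhds 1) := by
  have h := (tendsto_const_nhds (x := (1:ℝ)) (f := atTop)).add
    (tendsto_const_div_atTop_nhds_zero_nat (c:ℝ))
  rw [add_zero] at h
  apply h.congr'
  filter_upwards [eventually_gt_atTop 0] with m hm
  have hm0 : (m:ℝ) ≠ 0 := by positivity
  field_simp

lemma psi_comp (g : ℕ → ℕ) (hg : Tendsto g atTop atTop) {C : ℝ}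
    (hC : Tendsto (fun m : ℕ => ((g m : ℝ)) / m) atTop (nhds C)) :
    Tendsto (fun m : ℕ => gvPsi (g m) / m) atTop (nhds 0) := by
  have h1 : Tendsto (fun m : ℕ => gvPsi (g m) / (g m)) atTop (nhds 0) :=
    gvPsi_div_tendsto.comp hg
  have h2 := h1.mul hC
  rw [zero_mul] at h2
  apply h2.congr'
  filter_upwards [hg.eventually_ge_atTop 1, eventually_ge_atTop 1] with m hgm hm
  have h0 : ((g m : ℕ) : ℝ) ≠ 0 := by
    have : 0 < g m := hgm
    positivity
  have hm0 : (m:ℝ) ≠ 0 := by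
    have : 0 < m := hm
    positivity
  field_simp

lemma tendsto_log_add_div (c : ℕ) :
    Tendsto (fun m : ℕ => Real.log ((m : ℝ) + c) / m) atTop (nhds 0) := by
  have hcomp : Tendsto (fun m : ℕ => (m : ℝ) + c) atTop atTop :=
    tendsto_atTop_add_const_right _ _ tendsto_natCast_atTop_atTop
  have h1 : Tendsto (fun m : ℕ => Real.log ((m:ℝ) + c) / ((m:ℝ) + c)) atTop (nhds 0) :=
    tendsto_log_div_nat.comp hcomp
  have h2 := h1.mul (tendsto_add_div_self c)
  rw [zero_mul] at h2
  apply h2.congr'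
  filter_upwards [eventually_ge_atTop 1] with m hm
  have hm0 : (m:ℝ) ≠ 0 := by
    have : 0 < m := hm
    positivity
  have hmc : (m:ℝ) + c ≠ 0 := by positivity
  field_simp

lemma tendsto_log_ratio (c : ℕ) :
    Tendsto (fun m : ℕ => Real.log (((m : ℝ) + c) / m)) atTop (nhds 0) := by
  have := (tendsto_add_div_self c).log one_ne_zero
  simpa using this

noncomputable def gvTerm (k j m : ℕ) : ℝ :=
  ((m:ℝ) * Real.log k - ((j-1 : ℕ):ℝ) * Real.log ((m:ℝ) + ((j-1 : ℕ):ℝ))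
    - (m:ℝ) * Real.log (((m:ℝ) + ((j-1 : ℕ):ℝ)) / (m:ℝ))
    + ((j-1 : ℕ):ℝ) + Real.log (((j-1).factorial : ℝ)) - gvPsi (m + (j-1)))
    / (2 * (k:ℝ) * (m:ℝ))

lemma tendsto_gvTerm (k j : ℕ) (hk : 1 ≤ k) :
    Tendsto (fun m : ℕ => gvTerm k j m) atTop (nhds (Real.log k / (2 * k))) := by
  set c : ℕ := j - 1
  have hk0 : ((k:ℝ)) ≠ 0 := by positivity
  have hpsi : Tendsto (fun m : ℕ => gvPsi (m + c) / m) atTop (nhds 0) := by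
    apply psi_comp (fun m => m + c)
      (tendsto_atTop_mono (fun m => Nat.le_add_right m c) tendsto_id)
    exact (tendsto_add_div_self c).congr (fun m => by push_cast; ring_nf)
  have h2 : Tendsto (fun m : ℕ => ((c:ℝ) / (2*k)) * (Real.log ((m:ℝ) + c) / m)) atTop (nhds 0) := by
    have := (tendsto_log_add_div c).const_mul ((c:ℝ) / (2*k))
    simpa using this
  have h3 : Tendsto (fun m : ℕ => (1 / (2*(k:ℝ))) * Real.log (((m:ℝ) + c) / m)) atTop (nhds 0) := by
    have := (tendsto_log_ratio c).const_mul (1 / (2*(k:ℝ)))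
    simpa using this
  have h4 : Tendsto (fun m : ℕ =>
      (((c:ℝ) + Real.log ((c).factorial : ℝ)) / (2*k)) / m) atTop (nhds 0) :=
    tendsto_const_div_atTop_nhds_zero_nat _
  have h5 : Tendsto (fun m : ℕ => (1 / (2*(k:ℝ))) * (gvPsi (m + c) / m)) atTop (nhds 0) := by
    have := hpsi.const_mul (1 / (2*(k:ℝ)))
    simpa using this
  have hfull := ((((tendsto_const_nhds
      (x := Real.log k / (2 * (k:ℝ))) (f := atTop)).sub h2).sub h3).add h4).sub h5
  rw [sub_zero, sub_zero, add_zero, sub_zero] at hfull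
  apply hfull.congr'
  filter_upwards [eventually_ge_atTop 1] with m hm
  have hm0 : (m:ℝ) ≠ 0 := by
    have : 0 < m := hm
    positivity
  unfold gvTerm
  field_simp
  ring

lemma numer_eq (k : ℕ) (hk : 1 ≤ k) {m : ℕ} (hm : 1 ≤ m) :
    Real.log (((k * m).factorial : ℝ) * gvA k m) =
      gvPsi (k * m) + ∑ j ∈ Finset.Icc 1 k, (gvTerm k j m * (2 * (k:ℝ) * (m:ℝ))) := by
  have hk0 : ((k:ℝ)) ≠ 0 := by positivity
  have hm0 : ((m:ℝ)) ≠ 0 := by positivity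
  have hstep1 : Real.log (((k * m).factorial : ℝ) * gvA k m) =
      Real.log (((k * m).factorial : ℝ)) + Real.log (gvA k m) :=
    Real.log_mul (by positivity) (ne_of_gt (gvA_pos k m))
  have hstep2 : Real.log (gvA k m) = ∑ j ∈ Finset.Icc 1 k,
      (Real.log (((j-1).factorial : ℝ)) - Real.log (((m + j - 1).factorial : ℝ))) := by
    unfold gvA
    rw [Real.log_prod]
    · exact Finset.sum_congr rfl fun j hj => Real.log_div (by positivity) (by positivity)
    · intro j hj
      have h1 : (0:ℝ) < ((j-1).factorial : ℝ) := by positivity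
      have h2 : (0:ℝ) < ((m + j - 1).factorial : ℝ) := by positivity
      positivity
  have hexp : ∀ j ∈ Finset.Icc 1 k, Real.log (((m + j - 1).factorial : ℝ)) =
      ((m:ℝ) + ((j-1:ℕ):ℝ)) * Real.log ((m:ℝ) + ((j-1:ℕ):ℝ)) - ((m:ℝ) + ((j-1:ℕ):ℝ))
        + gvPsi (m + (j-1)) := by
    intro j hj
    have hj1 : 1 ≤ j := (Finset.mem_Icc.mp hj).1
    have he : m + j - 1 = m + (j - 1) := by omega
    rw [he, log_factorial_eq]
    push_cast
    ring
  have hterm : ∀ j ∈ Finset.Icc 1 k, gvTerm k j m * (2 * (k:ℝ) * (m:ℝ)) =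
      (m:ℝ) * Real.log ((k:ℝ) * (m:ℝ)) - (m:ℝ)
        - (((m:ℝ) + ((j-1:ℕ):ℝ)) * Real.log ((m:ℝ) + ((j-1:ℕ):ℝ)) - ((m:ℝ) + ((j-1:ℕ):ℝ))
          + gvPsi (m + (j-1)))
        + Real.log (((j-1).factorial : ℝ)) := by
    intro j hj
    unfold gvTerm
    rw [div_mul_cancel₀ _ (by positivity)]
    have hmc : (0:ℝ) < (m:ℝ) + ((j-1:ℕ):ℝ) := by positivity
    rw [Real.log_div (by positivity) hm0, Real.log_mul hk0 hm0]
    ring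
  rw [hstep1, hstep2, log_factorial_eq (k*m)]
  rw [show (∑ j ∈ Finset.Icc 1 k,
        (Real.log (((j-1).factorial : ℝ)) - Real.log (((m + j - 1).factorial : ℝ)))) =
      ∑ j ∈ Finset.Icc 1 k, (Real.log (((j-1).factorial : ℝ)) -
        (((m:ℝ) + ((j-1:ℕ):ℝ)) * Real.log ((m:ℝ) + ((j-1:ℕ):ℝ)) - ((m:ℝ) + ((j-1:ℕ):ℝ))
          + gvPsi (m + (j-1)))) from
    Finset.sum_congr rfl (fun j hj => by rw [hexp j hj])]
  rw [Finset.sum_congr rfl hterm]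
  simp only [Finset.sum_sub_distrib, Finset.sum_add_distrib, Finset.sum_const, Nat.card_Icc,
    nsmul_eq_mul]
  have hcard : k + 1 - 1 = k := by omega
  rw [hcard]
  push_cast
  ring

lemma main_tendsto (k : ℕ) (hk : 1 ≤ k) :
    Tendsto (fun m : ℕ => Real.log (((k * m).factorial : ℝ) * gvA k m) / ((2 * k * m : ℕ) : ℝ))
      atTop (nhds (Real.log k / 2)) := by
  have hk0 : ((k:ℝ)) ≠ 0 := by positivity
  have hsum : Tendsto (fun m : ℕ => ∑ j ∈ Finset.Icc 1 k, gvTerm k j m) atTop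
      (nhds (Real.log k / 2)) := by
    have h := tendsto_finset_sum (Finset.Icc 1 k)
      (fun j (_ : j ∈ Finset.Icc 1 k) => tendsto_gvTerm k j hk)
    have he : (∑ _j ∈ Finset.Icc 1 k, (Real.log k / (2 * (k:ℝ)))) = Real.log k / 2 := by
      rw [Finset.sum_const, Nat.card_Icc, nsmul_eq_mul]
      have : k + 1 - 1 = k := by omega
      rw [this]
      field_simp
    rwa [he] at h
  have hpsi : Tendsto (fun m : ℕ => (1 / (2 * (k:ℝ))) * (gvPsi (k * m) / m)) atTop (nhds 0) := by
    have hg : Tendsto (fun m : ℕ => k * m) atTop atTop :=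
      tendsto_atTop_mono (fun m => Nat.le_mul_of_pos_left m hk) tendsto_id
    have hC : Tendsto (fun m : ℕ => (((k * m : ℕ)) : ℝ) / m) atTop (nhds (k:ℝ)) := by
      apply tendsto_const_nhds.congr'
      filter_upwards [eventually_ge_atTop 1] with m hm
      have hm0 : (m:ℝ) ≠ 0 := by
        have : 0 < m := hm
        positivity
      push_cast
      field_simp
    have := (psi_comp (fun m => k * m) hg hC).const_mul (1 / (2 * (k:ℝ)))
    simpa using this
  have hfull := hpsi.add hsum
  rw [zero_add] at hfull
  apply hfull.congr'
  filter_upwards [eventually_ge_atTop 1] with m hm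
  have hm0 : ((m:ℝ)) ≠ 0 := by
    have : 0 < m := hm
    positivity
  rw [numer_eq k hk hm, ← Finset.sum_mul]
  have hD : ((2 * k * m : ℕ) : ℝ) = 2 * (k:ℝ) * (m:ℝ) := by push_cast; ring
  rw [hD]
  field_simp

theorem gv_radius_grassmann_bound_and_limit (k : ℕ) (hk : 1 ≤ k) (R : ℝ) (hR : 0 < R) :
    (∀ n : ℕ, k + 1 ≤ n →
      ((1 : ℝ) / 2) ^ ((n : ℝ) * R / ((2 * k * (n - k) : ℕ) : ℝ)) ≤
        gvRadiusGrassmann k R n) ∧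
    (∀ m n : ℕ, k + 1 ≤ m → m ≤ n →
      ((1 : ℝ) / 2) ^ ((m : ℝ) * R / ((2 * k * (m - k) : ℕ) : ℝ)) ≤
        ((1 : ℝ) / 2) ^ ((n : ℝ) * R / ((2 * k * (n - k) : ℕ) : ℝ))) ∧
    Tendsto (gvRadiusGrassmann k R) atTop
      (nhds (Real.sqrt ((k : ℝ) * (2 : ℝ) ^ (-R / (k : ℝ))))) := by
  have hk0 : ((k:ℝ)) ≠ 0 := by positivity
  refine ⟨?_, ?_, ?_⟩
  · -- part (i)
    intro n hn
    obtain ⟨m, hm, rfl⟩ : ∃ m, 1 ≤ m ∧ m + k = n := ⟨n - k, by omega, by omega⟩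
    rw [gvRadius_eq, show (m + k) - k = m by omega]
    set D : ℝ := ((2 * k * m : ℕ) : ℝ) with hD
    have hD0 : 0 < D := by
      have : 0 < 2 * k * m := by positivity
      rw [hD]; exact_mod_cast this
    have h1 : ((1:ℝ)/2) ^ (((m + k : ℕ) : ℝ) * R / D) =
        ((2:ℝ) ^ (-((m + k : ℕ):ℝ) * R)) ^ (1 / D) := by
      rw [← Real.rpow_mul (by norm_num : (0:ℝ) ≤ 2), one_div,
          Real.inv_rpow (by norm_num : (0:ℝ) ≤ 2), ← Real.rpow_neg (by norm_num : (0:ℝ) ≤ 2)]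
      congr 1
      ring
    rw [h1]
    apply Real.rpow_le_rpow (by positivity) ?_ (by positivity)
    nth_rewrite 1 [← mul_one ((2:ℝ) ^ (-((m + k : ℕ):ℝ) * R))]
    exact mul_le_mul_of_nonneg_left (one_le_X k hm) (by positivity)
  · -- part (ii)
    intro m n hm hmn
    apply Real.rpow_le_rpow_of_exponent_ge (by norm_num) (by norm_num)
    have hkm : k ≤ m := by omega
    have hkn : k ≤ n := by omega
    have hm' : ((m - k : ℕ) : ℝ) = (m : ℝ) - k := by rw [Nat.cast_sub hkm]
    have hn' : ((n - k : ℕ) : ℝ) = (n : ℝ) - k := by rw [Nat.cast_sub hkn]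
    have hk1 : (1:ℝ) ≤ (k:ℝ) := by exact_mod_cast hk
    have hmk : (0:ℝ) < (m:ℝ) - k := by
      have : k + 1 ≤ m := hm
      have := (Nat.cast_le (α := ℝ)).2 this
      push_cast at this; linarith
    have hnk : (0:ℝ) < (n:ℝ) - k := by
      have : k + 1 ≤ n := by omega
      have := (Nat.cast_le (α := ℝ)).2 this
      push_cast at this; linarith
    have hmnR : (m:ℝ) ≤ (n:ℝ) := by exact_mod_cast hmn
    push_cast [hm', hn']
    rw [div_le_div_iff₀ (by positivity) (by positivity)]
    have hkey : (n:ℝ) * ((m:ℝ) - k) ≤ (m:ℝ) * ((n:ℝ) - k) := by nlinarith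
    nlinarith [mul_le_mul_of_nonneg_left hkey (le_of_lt hR), hR.le, hk1]
  · -- part (iii)
    set ℓ : ℝ := Real.log k / 2 - R * Real.log 2 / (2 * (k:ℝ)) with hℓ
    have hL : Real.sqrt ((k : ℝ) * (2 : ℝ) ^ (-R / (k : ℝ))) = Real.exp ℓ := by
      have hx : (0:ℝ) < (k : ℝ) * (2 : ℝ) ^ (-R / (k : ℝ)) := by
        have : (0:ℝ) < (2 : ℝ) ^ (-R / (k : ℝ)) := Real.rpow_pos_of_pos (by norm_num) _
        positivity
      rw [Real.sqrt_eq_rpow, Real.rpow_def_of_pos hx,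
          Real.log_mul hk0 (ne_of_gt (Real.rpow_pos_of_pos (by norm_num) _)),
          Real.log_rpow (by norm_num : (0:ℝ) < 2)]
      congr 1
      rw [hℓ]
      field_simp
      ring
    rw [hL]
    rw [← tendsto_add_atTop_iff_nat k]
    have ha : Tendsto (fun m : ℕ =>
        (-R * Real.log 2 / (2 * (k:ℝ))) * (((m:ℝ) + k) / m)) atTop
        (nhds (-R * Real.log 2 / (2 * (k:ℝ)))) := by
      have := (tendsto_add_div_self k).const_mul (-R * Real.log 2 / (2 * (k:ℝ)))
      simpa using this
    have hE : Tendsto (fun m : ℕ =>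
        ((-((m + k : ℕ) : ℝ) * R) * Real.log 2 +
          Real.log (((k * m).factorial : ℝ) * gvA k m)) / ((2 * k * m : ℕ) : ℝ))
        atTop (nhds ℓ) := by
      have h := ha.add (main_tendsto k hk)
      have hlim : -R * Real.log 2 / (2 * (k:ℝ)) + Real.log k / 2 = ℓ := by rw [hℓ]; ring
      rw [hlim] at h
      apply h.congr'
      filter_upwards [eventually_ge_atTop 1] with m hm
      have hm0 : ((m:ℝ)) ≠ 0 := by
        have : 0 < m := hm
        positivity
      have hD : ((2 * k * m : ℕ) : ℝ) = 2 * (k:ℝ) * (m:ℝ) := by push_cast; ring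
      rw [hD]
      push_cast
      field_simp
    have hexp := (Real.continuous_exp.tendsto ℓ).comp hE
    apply hexp.congr'
    filter_upwards [eventually_ge_atTop 1] with m hm
    rw [gvRadius_eq]
    have hX : (0:ℝ) < (2 : ℝ) ^ (-((m + k : ℕ) : ℝ) * R) * (((k * m).factorial : ℝ) * gvA k m) := by
      have h1 : (0:ℝ) < (2 : ℝ) ^ (-((m + k : ℕ) : ℝ) * R) := Real.rpow_pos_of_pos (by norm_num) _
      have h2 : (0:ℝ) < ((k * m).factorial : ℝ) := by positivity
      have h3 := gvA_pos k m
      positivity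
    have h1 : (0:ℝ) < (2 : ℝ) ^ (-((m + k : ℕ) : ℝ) * R) := Real.rpow_pos_of_pos (by norm_num) _
    have h2 : (0:ℝ) < ((k * m).factorial : ℝ) * gvA k m :=
      mul_pos (by positivity) (gvA_pos k m)
    rw [Real.rpow_def_of_pos hX, Real.log_mul (ne_of_gt h1) (ne_of_gt h2),
        Real.log_rpow (by norm_num : (0:ℝ) < 2), mul_one_div]
    rfl
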